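/- The function Π(w) := ∫₀¹ (z − z²) log(1 − (z − z²) w) dz, defined for real w < 4, extends to a holomorphic function of w on ℂ \ [4, ∞); consequently k ↦ Π(k²/m²) is holomorphic on {k ∈ ℂ⁴ : k² ∉ ℝ or k² < 4m²}. -/

import Mathlib

open intervalIntegral

/-- The complexified Minkowski square `k² = (k⁰)² − (k¹)² − (k²)² − (k³)²`. -/
def minkSq (k : Fin 4 → ℂ) : ℂ := (k 0) ^ 2 - (k 1) ^ 2 - (k 2) ^ 2 - (k 3) ^ 2

namespace PiHolo

/-- `z - z²` as a complex function of a real variable. -/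
noncomputable def A (z : ℝ) : ℂ := (z : ℂ) - (z : ℂ) ^ 2

lemma A_eq (z : ℝ) : A z = ((z - z ^ 2 : ℝ) : ℂ) := by simp [A]

lemma continuous_A : Continuous A := by unfold A; continuity

/-- The cut complement `ℂ \ [4, ∞)`. -/
def U : Set ℂ := {w : ℂ | ¬ (w.im = 0 ∧ 4 ≤ w.re)}

lemma isOpen_U : IsOpen U := by
  have : U = {w : ℂ | w.im ≠ 0} ∪ {w : ℂ | w.re < 4} := by
    ext w
    simp only [U, Set.mem_setOf_eq, Set.mem_union, not_and_or, not_le]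
  rw [this]
  exact (isOpen_ne_fun (Complex.continuous_im) continuous_const).union
    (isOpen_lt (Complex.continuous_re) continuous_const)

lemma norm_A_le (z : ℝ) (hz : z ∈ Set.Icc (0 : ℝ) 1) : ‖A z‖ ≤ 1 := by
  rw [A_eq, Complex.norm_real, Real.norm_eq_abs, abs_le]
  obtain ⟨h0, h1⟩ := hz
  constructor <;> nlinarith

lemma slit_mem {z : ℝ} (hz : z ∈ Set.Icc (0 : ℝ) 1) {w : ℂ} (hw : w ∈ U) :
    1 - A z * w ∈ Complex.slitPlane := by
  obtain ⟨h0, h1⟩ := hz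
  have ha0 : (0 : ℝ) ≤ z - z ^ 2 := by nlinarith
  have ha4 : z - z ^ 2 ≤ 1 / 4 := by nlinarith [sq_nonneg (z - 1 / 2)]
  rw [A_eq]
  rw [Complex.mem_slitPlane_iff]
  have hre : (1 - ((z - z ^ 2 : ℝ) : ℂ) * w).re = 1 - (z - z ^ 2) * w.re := by
    simp [Complex.sub_re, Complex.mul_re, Complex.ofReal_re, Complex.ofReal_im,
      ← Complex.ofReal_pow]
  have him : (1 - ((z - z ^ 2 : ℝ) : ℂ) * w).im = -((z - z ^ 2) * w.im) := by
    simp [Complex.sub_im, Complex.mul_im, Complex.ofReal_re, Complex.ofReal_im,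
      ← Complex.ofReal_pow]
  rcases eq_or_lt_of_le ha0 with h | h
  · left; rw [hre, ← h]; norm_num
  · by_cases himw : w.im = 0
    · left
      have hrew : w.re < 4 := by
        simp only [U, Set.mem_setOf_eq, not_and_or, not_le] at hw
        rcases hw with h' | h'
        · exact absurd himw h'
        · exact h'
      rw [hre]
      rcases le_or_gt w.re 0 with hr | hr
      · nlinarith
      · nlinarith
    · right
      rw [him]
      simp only [ne_eq, neg_eq_zero, mul_eq_zero, not_or]
      exact ⟨ne_of_gt h, himw⟩

/-- Continuity in `z` of the integrand. -/
lemma cont_integrand {w : ℂ} (hw : w ∈ U) :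
    ContinuousOn (fun z : ℝ => A z * Complex.log (1 - A z * w)) (Set.Icc 0 1) := by
  have hinner : Continuous fun z : ℝ => 1 - A z * w :=
    continuous_const.sub (continuous_A.mul continuous_const)
  refine continuous_A.continuousOn.mul ?_
  intro z hz
  exact (hinner.continuousAt.clog (slit_mem hz hw)).continuousWithinAt

/-- The holomorphic extension `Φ`. -/
noncomputable def Phi (w : ℂ) : ℂ :=
  ∫ z in (0 : ℝ)..1, A z * Complex.log (1 - A z * w)

set_option maxHeartbeats 1000000 in
lemma hasDerivAt_Phi {w₀ : ℂ} (hw₀ : w₀ ∈ U) :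
    ∃ d : ℂ, HasDerivAt Phi d w₀ := by
  obtain ⟨ε, εpos, hball⟩ :=
    Metric.nhds_basis_closedBall.mem_iff.mp (isOpen_U.mem_nhds hw₀)
  -- compact lower bound for the denominator
  have hgc : Continuous (fun p : ℝ × ℂ => ‖1 - A p.1 * p.2‖) :=
    (continuous_const.sub ((continuous_A.comp continuous_fst).mul continuous_snd)).norm
  have hKc : IsCompact (Set.Icc (0:ℝ) 1 ×ˢ Metric.closedBall w₀ ε) :=
    isCompact_Icc.prod (isCompact_closedBall w₀ ε)
  have hKne : (Set.Icc (0:ℝ) 1 ×ˢ Metric.closedBall w₀ ε).Nonempty :=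
    ⟨(0, w₀), by simp [εpos.le]⟩
  obtain ⟨p, hp, hmin⟩ := hKc.exists_isMinOn hKne hgc.continuousOn
  set c : ℝ := ‖1 - A p.1 * p.2‖ with hc
  have hcpos : 0 < c := by
    rw [hc, norm_pos_iff]
    exact Complex.slitPlane_ne_zero (slit_mem hp.1 (hball hp.2))
  have hcle : ∀ z ∈ Set.Icc (0:ℝ) 1, ∀ w ∈ Metric.closedBall w₀ ε, c ≤ ‖1 - A z * w‖ :=
    fun z hz w hw => isMinOn_iff.mp hmin (z, w) (Set.mk_mem_prod hz hw)
  -- derivative of the integrand in `w`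
  set F' : ℂ → ℝ → ℂ := fun w z => A z * ((1 - A z * w)⁻¹ * -(A z)) with hF'
  have hderiv : ∀ z ∈ Set.Icc (0:ℝ) 1, ∀ w ∈ U,
      HasDerivAt (fun w => A z * Complex.log (1 - A z * w)) (F' w z) w := by
    intro z hz w hw
    have h1 : HasDerivAt (fun w : ℂ => 1 - A z * w) (-(A z)) w := by
      simpa using ((hasDerivAt_id w).const_mul (A z)).const_sub 1
    have hlog := (Complex.hasDerivAt_log (slit_mem hz hw)).comp w h1
    exact hlog.const_mul (A z)
  have hιsub : Set.uIoc (0:ℝ) 1 ⊆ Set.Icc 0 1 := by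
    rw [Set.uIoc_of_le zero_le_one]
    exact Set.Ioc_subset_Icc_self
  have hmeas1 : ∀ᶠ w in nhds w₀,
      MeasureTheory.AEStronglyMeasurable (fun z : ℝ => A z * Complex.log (1 - A z * w))
        (MeasureTheory.volume.restrict (Set.uIoc (0:ℝ) 1)) := by
    filter_upwards [isOpen_U.mem_nhds hw₀] with w hw
    exact ((cont_integrand hw).mono hιsub).aestronglyMeasurable measurableSet_uIoc
  have hint : IntervalIntegrable (fun z : ℝ => A z * Complex.log (1 - A z * w₀))
      MeasureTheory.volume 0 1 :=
    ContinuousOn.intervalIntegrable (by rw [Set.uIcc_of_le zero_le_one]; exact cont_integrand hw₀)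
  have hmeas2 : MeasureTheory.AEStronglyMeasurable (F' w₀)
      (MeasureTheory.volume.restrict (Set.uIoc (0:ℝ) 1)) := by
    have hcont : ContinuousOn (F' w₀) (Set.Icc 0 1) := by
      refine continuous_A.continuousOn.mul (ContinuousOn.mul ?_ continuous_A.neg.continuousOn)
      refine ContinuousOn.inv₀
        (continuous_const.sub (continuous_A.mul continuous_const)).continuousOn ?_
      exact fun z hz => Complex.slitPlane_ne_zero (slit_mem hz hw₀)
    exact (hcont.mono hιsub).aestronglyMeasurable measurableSet_uIoc
  have hbound : ∀ᵐ z ∂(MeasureTheory.volume : MeasureTheory.Measure ℝ),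
      z ∈ Set.uIoc (0:ℝ) 1 → ∀ w ∈ Metric.ball w₀ ε, ‖F' w z‖ ≤ c⁻¹ := by
    refine MeasureTheory.ae_of_all _ fun z hz w hw => ?_
    have hz' : z ∈ Set.Icc (0:ℝ) 1 := hιsub hz
    have hw' : w ∈ Metric.closedBall w₀ ε := Metric.ball_subset_closedBall hw
    have hA1 : ‖A z‖ ≤ 1 := norm_A_le z hz'
    have hcw : c ≤ ‖1 - A z * w‖ := hcle z hz' w hw'
    rw [hF']
    simp only [norm_mul, norm_inv, norm_neg]
    calc ‖A z‖ * (‖1 - A z * w‖⁻¹ * ‖A z‖)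
        ≤ 1 * (c⁻¹ * 1) := by gcongr
      _ = c⁻¹ := by ring
  have hbi : IntervalIntegrable (fun _ : ℝ => c⁻¹) MeasureTheory.volume 0 1 :=
    intervalIntegrable_const
  have hdiff : ∀ᵐ z ∂(MeasureTheory.volume : MeasureTheory.Measure ℝ),
      z ∈ Set.uIoc (0:ℝ) 1 → ∀ w ∈ Metric.ball w₀ ε,
        HasDerivAt (fun w => A z * Complex.log (1 - A z * w)) (F' w z) w := by
    refine MeasureTheory.ae_of_all _ fun z hz w hw => ?_
    exact hderiv z (hιsub hz) w (hball (Metric.ball_subset_closedBall hw))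
  exact ⟨_, (intervalIntegral.hasDerivAt_integral_of_dominated_loc_of_deriv_le (Metric.ball_mem_nhds w₀ εpos)
    hmeas1 hint hmeas2 hbound hbi hdiff).2⟩

lemma Phi_eq (w : ℂ) :
    Phi w = ∫ z in (0 : ℝ)..1,
      ((z : ℂ) - (z : ℂ) ^ 2) * Complex.log (1 - ((z : ℂ) - (z : ℂ) ^ 2) * w) := rfl

lemma diffOn_Phi : DifferentiableOn ℂ Phi U := by
  intro w hw
  obtain ⟨d, hd⟩ := hasDerivAt_Phi hw
  exact hd.differentiableAt.differentiableWithinAt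

end PiHolo

/-- `Π(w) = ∫₀¹ (z−z²) log(1 − (z−z²)w) dz`, defined for real `w < 4`, extends to a
holomorphic function on `ℂ \ [4,∞)`; consequently `k ↦ Π(k²/m²)` is holomorphic on
`{k ∈ ℂ⁴ : k² ∉ ℝ or k² < 4m²}`. -/
theorem Pi_holomorphic_extension (m : ℝ) (hm : 0 < m) :
    ∃ Φ : ℂ → ℂ,
      (∀ w : ℝ, w < 4 →
        Φ (w : ℂ) = ∫ z in (0 : ℝ)..1,
          ((z : ℂ) - (z : ℂ) ^ 2) * Complex.log (1 - ((z : ℂ) - (z : ℂ) ^ 2) * (w : ℂ))) ∧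
      DifferentiableOn ℂ Φ {w : ℂ | ¬ (w.im = 0 ∧ 4 ≤ w.re)} ∧
      DifferentiableOn ℂ (fun k : Fin 4 → ℂ => Φ (minkSq k / (m : ℂ) ^ 2))
        {k : Fin 4 → ℂ |
          (minkSq k).im ≠ 0 ∨ ((minkSq k).im = 0 ∧ (minkSq k).re < 4 * m ^ 2)} := by
  refine ⟨PiHolo.Phi, fun w _ => PiHolo.Phi_eq _, PiHolo.diffOn_Phi, ?_⟩
  have hg : Differentiable ℂ (fun k : Fin 4 → ℂ => minkSq k / (m : ℂ) ^ 2) := by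
    have hcoord : ∀ i : Fin 4, Differentiable ℂ (fun k : Fin 4 → ℂ => k i) :=
      fun i => differentiable_pi.mp differentiable_id i
    have : Differentiable ℂ minkSq := by
      unfold minkSq
      exact ((((hcoord 0).pow 2).sub ((hcoord 1).pow 2)).sub ((hcoord 2).pow 2)).sub
        ((hcoord 3).pow 2)
    have h2 : Differentiable ℂ (fun k : Fin 4 → ℂ => minkSq k * ((m : ℂ) ^ 2)⁻¹) :=
      this.mul_const (((m : ℂ) ^ 2)⁻¹)
    simpa [div_eq_mul_inv] using h2
  have hmaps : Set.MapsTo (fun k : Fin 4 → ℂ => minkSq k / (m : ℂ) ^ 2)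
      {k : Fin 4 → ℂ |
          (minkSq k).im ≠ 0 ∨ ((minkSq k).im = 0 ∧ (minkSq k).re < 4 * m ^ 2)}
      PiHolo.U := by
    intro k hk
    have hm2 : (0:ℝ) < m ^ 2 := by positivity
    have hcast : ((m : ℂ)) ^ 2 = ((m ^ 2 : ℝ) : ℂ) := by push_cast; ring
    have hre : (minkSq k / (m : ℂ) ^ 2).re = (minkSq k).re / m ^ 2 := by
      rw [hcast, Complex.div_ofReal_re]
    have him : (minkSq k / (m : ℂ) ^ 2).im = (minkSq k).im / m ^ 2 := by
      rw [hcast, Complex.div_ofReal_im]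
    simp only [PiHolo.U, Set.mem_setOf_eq, not_and_or, not_le]
    rcases hk with h | ⟨h1, h2⟩
    · left
      rw [him]
      exact div_ne_zero h (ne_of_gt hm2)
    · right
      rw [hre]
      rw [div_lt_iff₀ hm2]
      linarith
  exact PiHolo.diffOn_Phi.comp hg.differentiableOn hmaps
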